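/- Let G be a finite group, χ an irreducible complex character of G, and K a conjugacy class of G with representative x_K. Then the complex number |K| · χ(x_K) / χ(1) is an algebraic integer (i.e., integral over ℤ). -/

import Mathlib

open Module CategoryTheory

/-- `χ` is the character of some irreducible finite-dimensional complex representation
of the group `G`. -/
def IsIrredChar (G : Type) [Monoid G] (χ : G → ℂ) : Prop :=
  ∃ V : FDRep ℂ G, CategoryTheory.Simple V ∧ χ = FDRep.character V

/-- For an irreducible complex character `χ` of a finite group `G` and a conjugacy class
`K = g^G`, the number `|K| * χ g / χ 1` is an algebraic integer. -/
theorem class_size_mul_char_div_degree_isIntegral {G : Type} [Group G] [Fintype G]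
    (χ : G → ℂ) (hχ : IsIrredChar G χ) (g : G) :
    IsIntegral ℤ ((Nat.card {h : G | IsConj g h} : ℂ) * χ g / χ 1) := by
  classical
  obtain ⟨V, hV, rfl⟩ := hχ
  haveI := hV
  set K : Finset G := Finset.univ.filter (IsConj g) with hK
  have hmem : ∀ {h : G}, h ∈ K ↔ IsConj g h := by
    intro h; simp [hK]
  -- the class sum in the group algebra
  set T : MonoidAlgebra ℂ G := ∑ h ∈ K, MonoidAlgebra.single h 1 with hT
  -- T is integral over ℤ, since it lies in a subalgebra which is f.g. as a ℤ-module
  have hTint : IsIntegral ℤ T := by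
    set Sm : Submodule ℤ (MonoidAlgebra ℂ G) :=
      Submodule.span ℤ (Set.range fun h : G => MonoidAlgebra.single h (1:ℂ)) with hSm
    have h1 : (1 : MonoidAlgebra ℂ G) ∈ Sm :=
      Submodule.subset_span ⟨1, rfl⟩
    have hmul : ∀ (x y : MonoidAlgebra ℂ G), x ∈ Sm → y ∈ Sm → x * y ∈ Sm := by
      intro x y hx hy
      have : Sm * Sm ≤ Sm := by
        rw [hSm, Submodule.span_mul_span]
        refine Submodule.span_le.2 ?_
        rintro _ ⟨_, ⟨a, rfl⟩, _, ⟨b, rfl⟩, rfl⟩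
        simp only []
        rw [show (MonoidAlgebra.single a (1:ℂ)) * MonoidAlgebra.single b 1
            = MonoidAlgebra.single (a*b) 1 by rw [MonoidAlgebra.single_mul_single, mul_one]]
        exact Submodule.subset_span ⟨a * b, rfl⟩
      exact this (Submodule.mul_mem_mul hx hy)
    have hfg : Sm.FG := Submodule.fg_span (Set.finite_range _)
    refine IsIntegral.of_mem_of_fg (Sm.toSubalgebra h1 hmul) hfg T ?_
    exact Submodule.sum_mem _ fun h _ => Submodule.subset_span ⟨h, rfl⟩
  -- the action of T on V
  set π := Representation.asAlgebraHom V.ρ with hπ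
  have hπT : π T = ∑ h ∈ K, V.ρ h := by
    rw [hT, map_sum]
    exact Finset.sum_congr rfl fun h _ => Representation.asAlgebraHom_single_one _ _
  -- π T commutes with the action of G
  have comm : ∀ s : G, V.ρ s * π T = π T * V.ρ s := by
    intro s
    rw [hπT, Finset.mul_sum, Finset.sum_mul]
    refine Finset.sum_nbij' (fun h => s * h * s⁻¹) (fun h => s⁻¹ * h * s) ?_ ?_ ?_ ?_ ?_
    · intro h hh
      exact hmem.2 ((hmem.1 hh).trans (isConj_iff.2 ⟨s, rfl⟩))
    · intro h hh
      exact hmem.2 ((hmem.1 hh).trans (isConj_iff.2 ⟨s⁻¹, by group⟩))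
    · intro h _; group
    · intro h _; group
    · intro h _
      rw [← map_mul, ← map_mul]
      congr 1; group
  -- hence, by Schur's lemma, π T is a scalar c
  let φ : V ⟶ V := ⟨FGModuleCat.ofHom (π T), fun s => FGModuleCat.hom_ext (comm s).symm⟩
  obtain ⟨c, hc⟩ := endomorphism_simple_eq_smul_id ℂ φ
  have hchom : π T = c • LinearMap.id := (congrArg (fun f : V ⟶ V => f.hom.hom.hom) hc).symm
  -- V is nontrivial
  haveI hVnt : Nontrivial V := by
    by_contra hnt
    haveI : Subsingleton V := not_nontrivial_iff_subsingleton.mp hnt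
    haveI : Subsingleton (↥V.V.obj) := ‹Subsingleton V›
    refine id_nonzero V (Action.hom_ext _ _ ?_)
    exact FGModuleCat.hom_ext (LinearMap.ext fun v => Subsingleton.elim _ _)
  have hd : (V.character 1) ≠ 0 := by
    rw [FDRep.char_one]
    exact Nat.cast_ne_zero.2 finrank_pos.ne'
  -- compute the trace of π T in two ways
  have htr : LinearMap.trace ℂ V (π T) = (K.card : ℂ) * V.character g := by
    rw [hπT, map_sum]
    rw [Finset.sum_congr rfl fun h hh => ?_, Finset.sum_const, nsmul_eq_mul]
    obtain ⟨u, hu⟩ := isConj_iff.1 (hmem.1 hh)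
    show V.character h = V.character g
    rw [← hu]
    exact FDRep.char_conj V g u
  have htr2 : LinearMap.trace ℂ V (π T) = c * V.character 1 := by
    rw [hchom, map_smul, LinearMap.trace_id, FDRep.char_one, smul_eq_mul]
  have hc_eq : c = (K.card : ℂ) * V.character g / V.character 1 := by
    rw [eq_div_iff hd, ← htr2, htr]
  -- c is an algebraic integer
  have hcint : IsIntegral ℤ c := by
    have h1 : IsIntegral ℤ (π T) := hTint.map (π.toRingHom.toIntAlgHom)
    have h2 : (algebraMap ℂ (Module.End ℂ V)) c = π T := by
      rw [hchom, Module.algebraMap_end_eq_smul_id]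
    have hinj : Function.Injective (algebraMap ℂ (Module.End ℂ V)) :=
      (algebraMap ℂ (Module.End ℂ V)).injective
    exact (isIntegral_algHom_iff ((algebraMap ℂ (Module.End ℂ V)).toIntAlgHom) hinj).1
      (by rw [show ((algebraMap ℂ (Module.End ℂ V)).toIntAlgHom c) =
        (algebraMap ℂ (Module.End ℂ V)) c from rfl, h2]; exact h1)
  have hcard : (Nat.card {h : G | IsConj g h} : ℂ) = (K.card : ℂ) := by
    norm_cast
    rw [Nat.card_eq_fintype_card, hK]
    exact Fintype.card_subtype _
  rw [hcard, ← hc_eq]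
  exact hcint
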